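/- Under the twisted and cocycle conditions (and ∇ ∘ σ = σ), the weak crossed product multiplication μ_{A⊗V} = (μ_A ⊗ V) ∘ (μ_A ⊗ σ) ∘ (A ⊗ ψ ⊗ V) is normalized with respect to the idempotent ∇, that is, ∇ ∘ μ_{A⊗V} = μ_{A⊗V} = μ_{A⊗V} ∘ (∇ ⊗ ∇). -/
import Mathlib


open TensorProduct

variable {R A V : Type*} [CommRing R] [Ring A] [Algebra R A]
  [AddCommGroup V] [Module R V]

/-- (μ_A ⊗ V) ∘ (A ⊗ ψ) ∘ (ψ ⊗ A) : (V ⊗ A) ⊗ A → A ⊗ V -/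
noncomputable def psiMulLHS (ψ : V ⊗[R] A →ₗ[R] A ⊗[R] V) :
    (V ⊗[R] A) ⊗[R] A →ₗ[R] A ⊗[R] V :=
  TensorProduct.map (LinearMap.mul' R A) LinearMap.id
    ∘ₗ (TensorProduct.assoc R A A V).symm.toLinearMap
    ∘ₗ LinearMap.lTensor A ψ
    ∘ₗ (TensorProduct.assoc R A V A).toLinearMap
    ∘ₗ LinearMap.rTensor A ψ

/-- ψ ∘ (V ⊗ μ_A) : (V ⊗ A) ⊗ A → A ⊗ V -/
noncomputable def psiMulRHS (ψ : V ⊗[R] A →ₗ[R] A ⊗[R] V) :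
    (V ⊗[R] A) ⊗[R] A →ₗ[R] A ⊗[R] V :=
  ψ ∘ₗ LinearMap.lTensor V (LinearMap.mul' R A)
    ∘ₗ (TensorProduct.assoc R V A A).toLinearMap

/-- ∇ = (μ_A ⊗ V) ∘ (A ⊗ ψ) ∘ (A ⊗ V ⊗ η_A) : A ⊗ V → A ⊗ V -/
noncomputable def nabla (ψ : V ⊗[R] A →ₗ[R] A ⊗[R] V) :
    A ⊗[R] V →ₗ[R] A ⊗[R] V :=
  TensorProduct.map (LinearMap.mul' R A) LinearMap.id
    ∘ₗ (TensorProduct.assoc R A A V).symm.toLinearMap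
    ∘ₗ LinearMap.lTensor A ψ
    ∘ₗ LinearMap.lTensor A ((TensorProduct.mk R V A).flip 1)


/-- Twisted condition LHS: (μ_A ⊗ V) ∘ (A ⊗ ψ) ∘ (σ ⊗ A) : (V ⊗ V) ⊗ A → A ⊗ V. -/
noncomputable def twistedLHS (ψ : V ⊗[R] A →ₗ[R] A ⊗[R] V)
    (σ : V ⊗[R] V →ₗ[R] A ⊗[R] V) : (V ⊗[R] V) ⊗[R] A →ₗ[R] A ⊗[R] V :=
  TensorProduct.map (LinearMap.mul' R A) LinearMap.id
    ∘ₗ (TensorProduct.assoc R A A V).symm.toLinearMap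
    ∘ₗ LinearMap.lTensor A ψ
    ∘ₗ (TensorProduct.assoc R A V A).toLinearMap
    ∘ₗ LinearMap.rTensor A σ

/-- Twisted condition RHS: (μ_A ⊗ V) ∘ (A ⊗ σ) ∘ (ψ ⊗ V) ∘ (V ⊗ ψ) : V ⊗ (V ⊗ A) → A ⊗ V. -/
noncomputable def twistedRHS (ψ : V ⊗[R] A →ₗ[R] A ⊗[R] V)
    (σ : V ⊗[R] V →ₗ[R] A ⊗[R] V) : V ⊗[R] (V ⊗[R] A) →ₗ[R] A ⊗[R] V :=
  TensorProduct.map (LinearMap.mul' R A) LinearMap.id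
    ∘ₗ (TensorProduct.assoc R A A V).symm.toLinearMap
    ∘ₗ LinearMap.lTensor A σ
    ∘ₗ (TensorProduct.assoc R A V V).toLinearMap
    ∘ₗ LinearMap.rTensor V ψ
    ∘ₗ (TensorProduct.assoc R V A V).symm.toLinearMap
    ∘ₗ LinearMap.lTensor V ψ

/-- Cocycle condition LHS: (μ_A ⊗ V) ∘ (A ⊗ σ) ∘ (σ ⊗ V) : (V ⊗ V) ⊗ V → A ⊗ V. -/
noncomputable def cocycleLHS (σ : V ⊗[R] V →ₗ[R] A ⊗[R] V) :
    (V ⊗[R] V) ⊗[R] V →ₗ[R] A ⊗[R] V :=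
  TensorProduct.map (LinearMap.mul' R A) LinearMap.id
    ∘ₗ (TensorProduct.assoc R A A V).symm.toLinearMap
    ∘ₗ LinearMap.lTensor A σ
    ∘ₗ (TensorProduct.assoc R A V V).toLinearMap
    ∘ₗ LinearMap.rTensor V σ

/-- Cocycle condition RHS: (μ_A ⊗ V) ∘ (A ⊗ σ) ∘ (ψ ⊗ V) ∘ (V ⊗ σ) : V ⊗ (V ⊗ V) → A ⊗ V. -/
noncomputable def cocycleRHS (ψ : V ⊗[R] A →ₗ[R] A ⊗[R] V)
    (σ : V ⊗[R] V →ₗ[R] A ⊗[R] V) : V ⊗[R] (V ⊗[R] V) →ₗ[R] A ⊗[R] V :=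
  TensorProduct.map (LinearMap.mul' R A) LinearMap.id
    ∘ₗ (TensorProduct.assoc R A A V).symm.toLinearMap
    ∘ₗ LinearMap.lTensor A σ
    ∘ₗ (TensorProduct.assoc R A V V).toLinearMap
    ∘ₗ LinearMap.rTensor V ψ
    ∘ₗ (TensorProduct.assoc R V A V).symm.toLinearMap
    ∘ₗ LinearMap.lTensor V σ

/-- Auxiliary map V ⊗ (A ⊗ V) → A ⊗ V used in the weak crossed product. -/
noncomputable def wcpAux (ψ : V ⊗[R] A →ₗ[R] A ⊗[R] V)
    (σ : V ⊗[R] V →ₗ[R] A ⊗[R] V) : V ⊗[R] (A ⊗[R] V) →ₗ[R] A ⊗[R] V :=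
  TensorProduct.map (LinearMap.mul' R A) LinearMap.id
    ∘ₗ (TensorProduct.assoc R A A V).symm.toLinearMap
    ∘ₗ LinearMap.lTensor A σ
    ∘ₗ (TensorProduct.assoc R A V V).toLinearMap
    ∘ₗ LinearMap.rTensor V ψ
    ∘ₗ (TensorProduct.assoc R V A V).symm.toLinearMap

/-- The weak crossed product multiplication
μ_{A⊗V} = (μ_A ⊗ V) ∘ (μ_A ⊗ σ) ∘ (A ⊗ ψ ⊗ V) on A ⊗ V. -/
noncomputable def wcpMul (ψ : V ⊗[R] A →ₗ[R] A ⊗[R] V)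
    (σ : V ⊗[R] V →ₗ[R] A ⊗[R] V) :
    (A ⊗[R] V) ⊗[R] (A ⊗[R] V) →ₗ[R] A ⊗[R] V :=
  TensorProduct.map (LinearMap.mul' R A) LinearMap.id
    ∘ₗ (TensorProduct.assoc R A A V).symm.toLinearMap
    ∘ₗ LinearMap.lTensor A (wcpAux ψ σ)
    ∘ₗ (TensorProduct.assoc R A V (A ⊗[R] V)).toLinearMap


section Aux

variable (ψ : V ⊗[R] A →ₗ[R] A ⊗[R] V) (σ : V ⊗[R] V →ₗ[R] A ⊗[R] V)

/-- Left multiplication by `a` on the first tensor factor. -/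
noncomputable def lmul (a : A) : A ⊗[R] V →ₗ[R] A ⊗[R] V :=
  LinearMap.rTensor V (LinearMap.mulLeft R a)

@[simp] lemma lmul_tmul (a c : A) (u : V) :
    lmul (R := R) (V := V) a (c ⊗ₜ u) = (a * c) ⊗ₜ u := by
  simp [lmul]

lemma lmul_add_apply (a a' : A) (t : A ⊗[R] V) :
    lmul (R := R) (V := V) (a + a') t = lmul a t + lmul a' t := by
  induction t using TensorProduct.induction_on with
  | zero => simp
  | tmul c u => simp [add_mul, add_tmul]
  | add x y hx hy => simp [hx, hy]; abel

lemma lmul_smul_apply (r : R) (a : A) (t : A ⊗[R] V) :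
    lmul (R := R) (V := V) (r • a) t = r • lmul a t := by
  induction t using TensorProduct.induction_on with
  | zero => simp
  | tmul c u => simp [smul_mul_assoc, smul_tmul']
  | add x y hx hy => simp [hx, hy]

lemma lmul_lmul (a b : A) (t : A ⊗[R] V) :
    lmul (R := R) (V := V) a (lmul b t) = lmul (a * b) t := by
  induction t using TensorProduct.induction_on with
  | zero => simp
  | tmul c u => simp [mul_assoc]
  | add x y hx hy => simp [hx, hy]

lemma muAssoc (a : A) (t : A ⊗[R] V) :
    TensorProduct.map (LinearMap.mul' R A) LinearMap.id
      ((TensorProduct.assoc R A A V).symm (a ⊗ₜ t)) = lmul a t := by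
  induction t using TensorProduct.induction_on with
  | zero => simp
  | tmul c u => simp
  | add x y hx hy => simp [tmul_add, hx, hy]

lemma assocAVA (b : A) (t : A ⊗[R] V) :
    (TensorProduct.assoc R A V A) (t ⊗ₜ b)
      = LinearMap.lTensor A ((TensorProduct.mk R V A).flip b) t := by
  induction t using TensorProduct.induction_on with
  | zero => simp
  | tmul c u => simp
  | add x y hx hy => simp [add_tmul, hx, hy]

lemma assocAVV (w : V) (t : A ⊗[R] V) :
    (TensorProduct.assoc R A V V) (t ⊗ₜ w)
      = LinearMap.lTensor A ((TensorProduct.mk R V V).flip w) t := by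
  induction t using TensorProduct.induction_on with
  | zero => simp
  | tmul c u => simp
  | add x y hx hy => simp [add_tmul, hx, hy]

/-- `tmap ψ b (c ⊗ u) = c · ψ(u ⊗ b)` -/
noncomputable def tmap (b : A) : A ⊗[R] V →ₗ[R] A ⊗[R] V :=
  TensorProduct.map (LinearMap.mul' R A) LinearMap.id
    ∘ₗ (TensorProduct.assoc R A A V).symm.toLinearMap
    ∘ₗ LinearMap.lTensor A ψ
    ∘ₗ LinearMap.lTensor A ((TensorProduct.mk R V A).flip b)

@[simp] lemma tmap_tmul (b c : A) (u : V) :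
    tmap ψ b (c ⊗ₜ u) = lmul c (ψ (u ⊗ₜ b)) := by
  simp [tmap, muAssoc]

lemma nabla_eq_tmap : nabla ψ = tmap ψ 1 := rfl

lemma nabla_tmul (a : A) (v : V) :
    nabla ψ (a ⊗ₜ v) = lmul a (ψ (v ⊗ₜ 1)) := by
  rw [nabla_eq_tmap, tmap_tmul]

lemma nabla_lmul (a : A) (t : A ⊗[R] V) :
    nabla ψ (lmul a t) = lmul a (nabla ψ t) := by
  induction t using TensorProduct.induction_on with
  | zero => simp
  | tmul c u => rw [lmul_tmul, nabla_tmul, nabla_tmul, lmul_lmul]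
  | add x y hx hy => simp [hx, hy]

/-- `qmap σ w (c ⊗ u) = c · σ(u ⊗ w)` -/
noncomputable def qmap (w : V) : A ⊗[R] V →ₗ[R] A ⊗[R] V :=
  TensorProduct.map (LinearMap.mul' R A) LinearMap.id
    ∘ₗ (TensorProduct.assoc R A A V).symm.toLinearMap
    ∘ₗ LinearMap.lTensor A σ
    ∘ₗ LinearMap.lTensor A ((TensorProduct.mk R V V).flip w)

@[simp] lemma qmap_tmul (w : V) (c : A) (u : V) :
    qmap σ w (c ⊗ₜ u) = lmul c (σ (u ⊗ₜ w)) := by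
  simp [qmap, muAssoc]

lemma qmap_lmul (w : V) (a : A) (t : A ⊗[R] V) :
    qmap σ w (lmul a t) = lmul a (qmap σ w t) := by
  induction t using TensorProduct.induction_on with
  | zero => simp
  | tmul c u => rw [lmul_tmul, qmap_tmul, qmap_tmul, lmul_lmul]
  | add x y hx hy => simp [hx, hy]

/-- `gmap ψ σ v = wcpAux ψ σ (v ⊗ -)`. -/
noncomputable def gmap (v : V) : A ⊗[R] V →ₗ[R] A ⊗[R] V :=
  wcpAux ψ σ ∘ₗ TensorProduct.mk R V (A ⊗[R] V) v

lemma wcpAux_tmul (v : V) (x : A ⊗[R] V) :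
    wcpAux ψ σ (v ⊗ₜ x) = gmap ψ σ v x := rfl

lemma gmap_tmul (v : V) (c : A) (u : V) :
    gmap ψ σ v (c ⊗ₜ u) = qmap σ u (ψ (v ⊗ₜ c)) := by
  simp [gmap, wcpAux, qmap, assocAVV]

lemma wcpMul_tmul (a : A) (v : V) (x : A ⊗[R] V) :
    wcpMul ψ σ ((a ⊗ₜ v) ⊗ₜ x) = lmul a (gmap ψ σ v x) := by
  simp [wcpMul, wcpAux_tmul, muAssoc]

lemma hpsi_elem (hψ : psiMulLHS ψ = psiMulRHS ψ) (v : V) (a b : A) :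
    tmap ψ b (ψ (v ⊗ₜ a)) = ψ (v ⊗ₜ (a * b)) := by
  have h := LinearMap.congr_fun hψ ((v ⊗ₜ a) ⊗ₜ b)
  simpa [psiMulLHS, psiMulRHS, assocAVA, tmap] using h

lemma twistedRHS_tmul (v : V) (x : V ⊗[R] A) :
    twistedRHS ψ σ (v ⊗ₜ x) = gmap ψ σ v (ψ x) := by
  simp [twistedRHS, gmap, wcpAux]

lemma twistedLHS_one (y : V ⊗[R] V) :
    twistedLHS ψ σ (y ⊗ₜ (1 : A)) = nabla ψ (σ y) := by
  simp [twistedLHS, nabla, assocAVA]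

lemma gmap_psi_one
    (htw : twistedLHS ψ σ =
      twistedRHS ψ σ ∘ₗ (TensorProduct.assoc R V V A).toLinearMap)
    (hσ : nabla ψ ∘ₗ σ = σ) (v w : V) :
    gmap ψ σ v (ψ (w ⊗ₜ 1)) = σ (v ⊗ₜ w) := by
  have h := LinearMap.congr_fun htw ((v ⊗ₜ w) ⊗ₜ (1 : A))
  rw [twistedLHS_one] at h
  simp only [LinearMap.comp_apply, LinearEquiv.coe_coe, TensorProduct.assoc_tmul,
    twistedRHS_tmul] at h
  have h2 := LinearMap.congr_fun hσ (v ⊗ₜ w)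
  rw [LinearMap.comp_apply] at h2
  rw [← h, h2]

/-- `bigmap ψ σ (a ⊗ v) = lmul a ∘ₗ gmap ψ σ v`. -/
noncomputable def bigmap : A ⊗[R] V →ₗ[R] (A ⊗[R] V →ₗ[R] A ⊗[R] V) :=
  TensorProduct.lift (LinearMap.mk₂ R (fun a v => lmul a ∘ₗ gmap ψ σ v)
    (fun a a' v => by
      apply LinearMap.ext; intro t
      simp [lmul_add_apply])
    (fun r a v => by
      apply LinearMap.ext; intro t
      simp [lmul_smul_apply])
    (fun a v v' => by
      apply LinearMap.ext; intro t
      simp [gmap, add_tmul])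
    (fun r a v => by
      apply LinearMap.ext; intro t
      simp only [LinearMap.comp_apply, LinearMap.smul_apply, gmap,
        TensorProduct.mk_apply, ← smul_tmul', map_smul]))

@[simp] lemma bigmap_tmul (a : A) (v : V) :
    bigmap ψ σ (a ⊗ₜ v) = lmul a ∘ₗ gmap ψ σ v := by
  simp [bigmap]

lemma qmap_tmap (s : A ⊗[R] V) (c : A) (u : V) :
    qmap σ u (tmap ψ c s) = bigmap ψ σ s (c ⊗ₜ u) := by
  induction s using TensorProduct.induction_on with
  | zero => simp
  | tmul d v' => simp [qmap_lmul, gmap_tmul]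
  | add x y hx hy => simp [hx, hy]

lemma gmap_lmul (hψ : psiMulLHS ψ = psiMulRHS ψ) (v : V) (b : A)
    (t : A ⊗[R] V) :
    gmap ψ σ v (lmul b t) = bigmap ψ σ (ψ (v ⊗ₜ b)) t := by
  induction t using TensorProduct.induction_on with
  | zero => simp
  | tmul c u =>
      rw [lmul_tmul, gmap_tmul, ← hpsi_elem ψ hψ v b c, qmap_tmap]
  | add x y hx hy => simp [hx, hy]

lemma bigmap_psi_one
    (htw : twistedLHS ψ σ =
      twistedRHS ψ σ ∘ₗ (TensorProduct.assoc R V V A).toLinearMap)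
    (hσ : nabla ψ ∘ₗ σ = σ) (w : V) (s : A ⊗[R] V) :
    bigmap ψ σ s (ψ (w ⊗ₜ 1)) = qmap σ w s := by
  induction s using TensorProduct.induction_on with
  | zero => simp
  | tmul d v' => simp [gmap_psi_one ψ σ htw hσ]
  | add x y hx hy => simp [hx, hy]

lemma gmap_nabla (hψ : psiMulLHS ψ = psiMulRHS ψ)
    (htw : twistedLHS ψ σ =
      twistedRHS ψ σ ∘ₗ (TensorProduct.assoc R V V A).toLinearMap)
    (hσ : nabla ψ ∘ₗ σ = σ) (v : V) (x : A ⊗[R] V) :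
    gmap ψ σ v (nabla ψ x) = gmap ψ σ v x := by
  induction x using TensorProduct.induction_on with
  | zero => simp
  | tmul b w =>
      rw [nabla_tmul, gmap_lmul ψ σ hψ, bigmap_psi_one ψ σ htw hσ, gmap_tmul]
  | add x y hx hy => simp [hx, hy]

lemma nabla_qmap (hσ : nabla ψ ∘ₗ σ = σ) (w : V) (t : A ⊗[R] V) :
    nabla ψ (qmap σ w t) = qmap σ w t := by
  induction t using TensorProduct.induction_on with
  | zero => simp
  | tmul c u =>
      rw [qmap_tmul, nabla_lmul, show nabla ψ (σ (u ⊗ₜ w)) = σ (u ⊗ₜ w) from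
        LinearMap.congr_fun hσ (u ⊗ₜ w)]
  | add x y hx hy => simp [hx, hy]

lemma nabla_gmap (hσ : nabla ψ ∘ₗ σ = σ) (v : V) (y : A ⊗[R] V) :
    nabla ψ (gmap ψ σ v y) = gmap ψ σ v y := by
  induction y using TensorProduct.induction_on with
  | zero => simp
  | tmul b w => rw [gmap_tmul, nabla_qmap ψ σ hσ]
  | add x y hx hy => simp [hx, hy]

lemma wcpMul_left (t : A ⊗[R] V) (b : A) (w : V) :
    wcpMul ψ σ (t ⊗ₜ (b ⊗ₜ w)) = qmap σ w (tmap ψ b t) := by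
  induction t using TensorProduct.induction_on with
  | zero => simp [zero_tmul]
  | tmul c u => rw [wcpMul_tmul, gmap_tmul, tmap_tmul, qmap_lmul]
  | add x y hx hy => simp [add_tmul, hx, hy]

lemma wcpMul_lmul_left (a : A) (t : A ⊗[R] V) (y : A ⊗[R] V) :
    wcpMul ψ σ ((lmul a t) ⊗ₜ y) = lmul a (wcpMul ψ σ (t ⊗ₜ y)) := by
  induction t using TensorProduct.induction_on with
  | zero => simp [zero_tmul]
  | tmul c u => rw [lmul_tmul, wcpMul_tmul, wcpMul_tmul, lmul_lmul]
  | add x y hx hy => simp [add_tmul, hx, hy]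

lemma wcpMul_psi_one (hψ : psiMulLHS ψ = psiMulRHS ψ) (v : V)
    (y : A ⊗[R] V) :
    wcpMul ψ σ ((ψ (v ⊗ₜ 1)) ⊗ₜ y) = gmap ψ σ v y := by
  induction y using TensorProduct.induction_on with
  | zero => simp [tmul_zero]
  | tmul b w =>
      rw [wcpMul_left, hpsi_elem ψ hψ v 1 b, one_mul, gmap_tmul]
  | add x y hx hy => simp [tmul_add, hx, hy]

end Aux

/-- Under the twisted and cocycle conditions (and ∇ ∘ σ = σ), the weak crossed
product multiplication is normalized with respect to ∇:
∇ ∘ μ_{A⊗V} = μ_{A⊗V} = μ_{A⊗V} ∘ (∇ ⊗ ∇). -/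
theorem wcpMul_normalized (ψ : V ⊗[R] A →ₗ[R] A ⊗[R] V)
    (σ : V ⊗[R] V →ₗ[R] A ⊗[R] V)
    (hψ : psiMulLHS ψ = psiMulRHS ψ)
    (htw : twistedLHS ψ σ =
      twistedRHS ψ σ ∘ₗ (TensorProduct.assoc R V V A).toLinearMap)
    (hco : cocycleLHS σ =
      cocycleRHS ψ σ ∘ₗ (TensorProduct.assoc R V V V).toLinearMap)
    (hσ : nabla ψ ∘ₗ σ = σ) :
    nabla ψ ∘ₗ wcpMul ψ σ = wcpMul ψ σ ∧
      wcpMul ψ σ ∘ₗ TensorProduct.map (nabla ψ) (nabla ψ) = wcpMul ψ σ := by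
  constructor
  · apply TensorProduct.ext'
    intro x y
    induction x using TensorProduct.induction_on with
    | zero => simp [zero_tmul]
    | tmul a v =>
        simp only [LinearMap.comp_apply]
        rw [wcpMul_tmul, nabla_lmul, nabla_gmap ψ σ hσ]
    | add x x' hx hx' => simp_all [add_tmul]
  · apply TensorProduct.ext'
    intro x y
    induction x using TensorProduct.induction_on with
    | zero => simp [zero_tmul]
    | tmul a v =>
        simp only [LinearMap.comp_apply, TensorProduct.map_tmul]
        rw [nabla_tmul, wcpMul_lmul_left, wcpMul_psi_one ψ σ hψ,
          gmap_nabla ψ σ hψ htw hσ, wcpMul_tmul]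
    | add x x' hx hx' => simp_all [add_tmul]
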